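/- Let μ ∈ ℂ, C ∈ ℂ with C ≠ 0, and let z : U → ℂ be differentiable and nowhere zero with 2z' = (z + μ)². Set x = −(μ + z)²/(2z) and y = −(μ + z)²/(2Cz). Then x' = x(Cy + z + μ), y' = y(z + x + μ), and z' = z(Bx + y) where B = −1/C − 1, i.e., (x, y, z) solves the 3D Lotka–Volterra system with A = 1, B = −1/C − 1, λ = μ, ν = 0. -/

import Mathlib

theorem solution_family_A1 (μ C : ℂ) (hC : C ≠ 0) (U : Set ℂ) (hU : IsOpen U)
    (z : ℂ → ℂ)
    (hz : ∀ t ∈ U, HasDerivAt z ((z t + μ) ^ 2 / 2) t)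
    (hne : ∀ t ∈ U, z t ≠ 0) :
    let x : ℂ → ℂ := fun t => -(μ + z t) ^ 2 / (2 * z t)
    let y : ℂ → ℂ := fun t => -(μ + z t) ^ 2 / (2 * C * z t)
    let B : ℂ := -1 / C - 1
    (∀ t ∈ U, HasDerivAt x (x t * (C * y t + z t + μ)) t) ∧
    (∀ t ∈ U, HasDerivAt y (y t * (z t + x t + μ)) t) ∧
    (∀ t ∈ U, HasDerivAt z (z t * (B * x t + y t)) t) := by
  intro x y B
  refine ⟨fun t ht => ?_, fun t ht => ?_, fun t ht => ?_⟩ <;>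
  · have hz' := hz t ht
    have h0 := hne t ht
    have h1 : HasDerivAt (fun t => μ + z t) ((z t + μ) ^ 2 / 2) t :=
      hz'.const_add μ
    have hnum : HasDerivAt (fun t => -(μ + z t) ^ 2)
        (-((2 : ℕ) * (μ + z t) ^ 1 * ((z t + μ) ^ 2 / 2))) t := (h1.pow 2).neg
    first
    | -- x equation
      (have hden : HasDerivAt (fun t => 2 * z t) (2 * ((z t + μ) ^ 2 / 2)) t :=
        hz'.const_mul 2
       have : HasDerivAt (fun t => -(μ + z t) ^ 2 / (2 * z t)) _ t := hnum.div hden (by simpa using h0)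
       convert this using 1
       show (-(μ + z t) ^ 2 / (2 * z t)) * (C * (-(μ + z t) ^ 2 / (2 * C * z t)) + z t + μ) = _
       field_simp
       ring)
    | -- y equation
      (have hden : HasDerivAt (fun t => 2 * C * z t) (2 * C * ((z t + μ) ^ 2 / 2)) t :=
        hz'.const_mul (2 * C)
       have : HasDerivAt (fun t => -(μ + z t) ^ 2 / (2 * C * z t)) _ t := hnum.div hden (by
         simp only [ne_eq, mul_eq_zero]
         push_neg
         exact ⟨⟨two_ne_zero, hC⟩, h0⟩)
       convert this using 1
       show (-(μ + z t) ^ 2 / (2 * C * z t)) * (z t + -(μ + z t) ^ 2 / (2 * z t) + μ) = _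
       field_simp
       ring)
    | -- z equation
      (convert hz' using 1
       show z t * ((-1 / C - 1) * (-(μ + z t) ^ 2 / (2 * z t)) + -(μ + z t) ^ 2 / (2 * C * z t)) = _
       field_simp
       ring)
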